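/- Let H be a bounded self-adjoint operator on a Hilbert space, let P be an orthogonal projection, set H̃ = PHP, and let Φ be a unit vector such that (1−P)H^n Φ = 0 for all n = 0, 1, ..., N₀−1. Then ‖e^{−itH̃}Φ − e^{−itH}Φ‖ ≤ 2·(e‖H‖t/N₀)^{N₀} for all t ≥ 0. -/

import Mathlib

set_option maxHeartbeats 1000000

lemma fact_bound : ∀ N : ℕ, 1 ≤ N → (N : ℝ) ^ N ≤ Real.exp (N - 1) * N.factorial := by
  intro N
  induction N with
  | zero => omega
  | succ n ih =>
    intro _
    rcases Nat.eq_zero_or_pos n with h0 | h0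
    · subst h0; simp
    have hn : (0:ℝ) < n := by exact_mod_cast h0
    have h1 : ((n:ℝ)+1) ^ n ≤ Real.exp 1 * n ^ n := by
      have : (1 + 1/(n:ℝ)) ≤ Real.exp (1/n) := by
        have := Real.add_one_le_exp (1/(n:ℝ)); linarith
      have h2 : (1 + 1/(n:ℝ)) ^ n ≤ Real.exp (1/n) ^ n :=
        pow_le_pow_left₀ (by positivity) this n
      have h3 : Real.exp (1/(n:ℝ)) ^ n = Real.exp 1 := by
        rw [← Real.exp_nat_mul]; congr 1; field_simp
      have h4 : ((n:ℝ)+1) ^ n = (1 + 1/(n:ℝ)) ^ n * n ^ n := by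
        rw [← mul_pow]; congr 1; field_simp
      rw [h4, ← h3]
      exact mul_le_mul_of_nonneg_right h2 (by positivity)
    have ihn := ih h0
    have hfac : (0:ℝ) ≤ (n.factorial : ℝ) := by positivity
    calc ((n+1:ℕ):ℝ) ^ (n+1) = ((n:ℝ)+1) * ((n:ℝ)+1) ^ n := by
            push_cast; ring
      _ ≤ ((n:ℝ)+1) * (Real.exp 1 * n ^ n) :=
            mul_le_mul_of_nonneg_left h1 (by positivity)
      _ ≤ ((n:ℝ)+1) * (Real.exp 1 * (Real.exp (n - 1) * n.factorial)) := by
            have := mul_le_mul_of_nonneg_left ihn (Real.exp_pos 1).le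
            exact mul_le_mul_of_nonneg_left this (by positivity)
      _ = Real.exp (((n:ℕ):ℝ) + 1 - 1) * (((n:ℝ)+1) * n.factorial) := by
            have : Real.exp 1 * Real.exp ((n:ℝ) - 1) = Real.exp (((n:ℕ):ℝ) + 1 - 1) := by
              rw [← Real.exp_add]; congr 1; ring
            calc ((n:ℝ)+1) * (Real.exp 1 * (Real.exp (n - 1) * n.factorial))
                = (Real.exp 1 * Real.exp ((n:ℝ)-1)) * (((n:ℝ)+1) * n.factorial) := by ring
              _ = _ := by rw [this]
      _ = Real.exp (((n+1:ℕ):ℝ) - 1) * ((n+1).factorial : ℝ) := by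
            push_cast [Nat.factorial_succ]; ring_nf


lemma tail_bound (x : ℝ) (hx : 0 ≤ x) (N : ℕ) (hN : 1 ≤ N)
    (hr : Real.exp 1 * x / N < 1) :
    ∑' n : ℕ, x ^ (n + N) / (n + N).factorial ≤ (Real.exp 1 * x / N) ^ N := by
  have hNpos : (0:ℝ) < N := by exact_mod_cast hN
  have he1 : (1:ℝ) < Real.exp 1 := by
    have := Real.exp_one_gt_d9; linarith
  have hxN : x / N < 1 / Real.exp 1 := by
    rw [div_lt_div_iff₀ hNpos (Real.exp_pos 1)] at *
    rw [div_lt_one hNpos] at hr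
    nlinarith
  have hxN1 : x / N < 1 := lt_trans hxN (by rw [div_lt_one (Real.exp_pos 1)]; exact he1)
  have hxNnn : 0 ≤ x / N := div_nonneg hx hNpos.le
  -- termwise comparison
  have hterm : ∀ n : ℕ, x ^ (n + N) / (n + N).factorial ≤
      (x ^ N / N.factorial) * (x / N) ^ n := by
    intro n
    have hfa : (N.factorial : ℝ) * (N:ℝ) ^ n ≤ ((n + N).factorial : ℝ) := by
      have h1 : N.factorial * N ^ n ≤ N.factorial * (N + 1) ^ n :=
        Nat.mul_le_mul_left _ (Nat.pow_le_pow_left (Nat.le_succ N) n)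
      have h2 : N.factorial * (N + 1) ^ n ≤ (N + n).factorial :=
        Nat.factorial_mul_pow_le_factorial
      have := le_trans h1 h2
      rw [Nat.add_comm N n] at this
      exact_mod_cast this
    have hpos : (0:ℝ) < (N.factorial : ℝ) * (N:ℝ) ^ n := by positivity
    calc x ^ (n + N) / (n + N).factorial
        ≤ x ^ (n + N) / ((N.factorial : ℝ) * (N:ℝ) ^ n) :=
          div_le_div_of_nonneg_left (by positivity) hpos hfa
      _ = (x ^ N / N.factorial) * (x / N) ^ n := by
          rw [pow_add, div_pow]
          field_simp
  -- summability
  have hsum1 : Summable (fun n : ℕ => x ^ (n + N) / (n + N).factorial) := by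
    exact_mod_cast (summable_nat_add_iff N).mpr (Real.summable_pow_div_factorial x)
  have hsum2 : Summable (fun n : ℕ => (x ^ N / N.factorial) * (x / N) ^ n) :=
    (summable_geometric_of_lt_one hxNnn hxN1).mul_left _
  have hts : ∑' n : ℕ, x ^ (n + N) / (n + N).factorial ≤
      (x ^ N / N.factorial) * (1 - x / N)⁻¹ := by
    calc ∑' n : ℕ, x ^ (n + N) / (n + N).factorial
        ≤ ∑' n : ℕ, (x ^ N / N.factorial) * (x / N) ^ n :=
          Summable.tsum_le_tsum hterm hsum1 hsum2
      _ = (x ^ N / N.factorial) * (1 - x / N)⁻¹ := by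
          rw [tsum_mul_left, tsum_geometric_of_lt_one hxNnn hxN1]
  refine le_trans hts ?_
  -- bound (x^N/N!) ≤ r^N / e  and (1 - x/N)⁻¹ ≤ e/(e-1)
  have hfb := fact_bound N hN
  have hstepa : x ^ N / N.factorial ≤ (Real.exp 1 * x / N) ^ N / Real.exp 1 := by
    have hrN : (Real.exp 1 * x / N) ^ N = Real.exp 1 ^ N * x ^ N / (N:ℝ) ^ N := by
      rw [div_pow, mul_pow]
    have hexp : Real.exp ((N:ℝ) - 1) = Real.exp 1 ^ N / Real.exp 1 := by
      rw [← Real.exp_nat_mul, ← Real.exp_sub]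
      congr 1
      simp
    have hNfpos : (0:ℝ) < N.factorial := by positivity
    have key : (N:ℝ) ^ N * Real.exp 1 ≤ Real.exp 1 ^ N * N.factorial := by
      rw [hexp] at hfb
      have epos := Real.exp_pos 1
      have := mul_le_mul_of_nonneg_right hfb epos.le
      calc (N:ℝ) ^ N * Real.exp 1 ≤ Real.exp 1 ^ N / Real.exp 1 * N.factorial * Real.exp 1 :=
            this
        _ = Real.exp 1 ^ N * N.factorial := by field_simp
    rw [hrN, div_le_div_iff₀ hNfpos (Real.exp_pos 1), div_mul_eq_mul_div,
      le_div_iff₀ (pow_pos hNpos N)]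
    nlinarith [mul_le_mul_of_nonneg_left key (pow_nonneg hx N)]
  have hstepb : (1 - x / N)⁻¹ ≤ Real.exp 1 / (Real.exp 1 - 1) := by
    have h1 : (Real.exp 1 - 1) / Real.exp 1 ≤ 1 - x / N := by
      have : 1 - 1 / Real.exp 1 = (Real.exp 1 - 1) / Real.exp 1 := by
        field_simp
      nlinarith [hxN]
    have h2 : (0:ℝ) < (Real.exp 1 - 1) / Real.exp 1 := by
      apply div_pos <;> nlinarith [Real.exp_pos 1]
    have := one_div_le_one_div_of_le h2 h1
    rw [one_div, one_div] at this
    refine le_trans this ?_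
    rw [inv_div]
  calc (x ^ N / N.factorial) * (1 - x / N)⁻¹
      ≤ ((Real.exp 1 * x / N) ^ N / Real.exp 1) * (Real.exp 1 / (Real.exp 1 - 1)) := by
        have hpos1 : (0:ℝ) < 1 - x / N := by linarith [hxN1]
        exact mul_le_mul hstepa hstepb (inv_nonneg.mpr hpos1.le) (by positivity)
    _ = (Real.exp 1 * x / N) ^ N / (Real.exp 1 - 1) := by
        rw [div_mul_div_comm, mul_comm (Real.exp 1) (Real.exp 1 - 1),
          mul_div_mul_right _ _ (ne_of_gt (Real.exp_pos 1))]
    _ ≤ (Real.exp 1 * x / N) ^ N := by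
        rw [div_le_iff₀ (by linarith)]
        have he2 : (2:ℝ) ≤ Real.exp 1 := by
          have := Real.exp_one_gt_d9; linarith
        nlinarith [he2, pow_nonneg (by positivity : (0:ℝ) ≤ Real.exp 1 * x / N) N]


open Complex

/-- Proposition 1 of the paper: if `H^n Φ` stays in the range of the projection `P` for all
`n < N₀`, then evolution under `H̃ = P H P` agrees with evolution under `H` up to
`2 (e ‖H‖ t / N₀)^N₀`. -/
theorem truncated_evolution_bound {E : Type*} [NormedAddCommGroup E]
    [InnerProductSpace ℂ E] [CompleteSpace E]
    (A P : E →L[ℂ] E) (hA : IsSelfAdjoint A)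
    (hPidem : IsIdempotentElem P) (hPsa : IsSelfAdjoint P)
    (Φ : E) (hΦ : ‖Φ‖ = 1) (N₀ : ℕ) (hN₀ : 1 ≤ N₀)
    (hK : ∀ n < N₀, ((1 - P) ∘L A ^ n) Φ = 0)
    (t : ℝ) (ht : 0 ≤ t) :
    ‖NormedSpace.exp ((-(t : ℂ) * Complex.I) • (P ∘L A ∘L P)) Φ -
        NormedSpace.exp ((-(t : ℂ) * Complex.I) • A) Φ‖ ≤
      2 * (Real.exp 1 * ‖A‖ * t / N₀) ^ N₀ := by
  set M : E →L[ℂ] E := P ∘L A ∘L P with hM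
  set c : ℂ := -(t : ℂ) * Complex.I with hc
  -- P norm bound
  have hPle : ∀ x : E, ‖P x‖ ≤ ‖x‖ := by
    intro x
    rcases eq_or_lt_of_le (norm_nonneg (P x)) with h0 | h0
    · rw [← h0]; exact norm_nonneg x
    have hsa : ∀ u v : E, inner ℂ (P u) v = (inner ℂ u (P v) : ℂ) := by
      intro u v
      rw [← ContinuousLinearMap.adjoint_inner_left P,
        ← ContinuousLinearMap.star_eq_adjoint, hPsa.star_eq]
    have h1 : (‖P x‖ : ℝ) ^ 2 = Complex.re (inner ℂ (P x) (P x) : ℂ) := by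
      rw [inner_self_eq_norm_sq_to_K (𝕜 := ℂ) (P x)]
      norm_cast
    have h2 : (inner ℂ (P x) (P x) : ℂ) = inner ℂ x (P x) := by
      rw [hsa x (P x)]
      congr 1
      have := congrArg (fun f : E →L[ℂ] E => f x) hPidem
      simpa [ContinuousLinearMap.mul_apply] using this
    have h3 : Complex.re (inner ℂ x (P x) : ℂ) ≤ ‖x‖ * ‖P x‖ := by
      refine le_trans (Complex.re_le_norm _) ?_
      exact norm_inner_le_norm x (P x)
    nlinarith [h1, h2 ▸ h1, h3]
  have hPnorm : ‖P‖ ≤ 1 := P.opNorm_le_bound zero_le_one (by simpa using hPle)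
  have hMnorm : ‖M‖ ≤ ‖A‖ := by
    calc ‖M‖ ≤ ‖P‖ * ‖A ∘L P‖ := ContinuousLinearMap.opNorm_comp_le _ _
      _ ≤ ‖P‖ * (‖A‖ * ‖P‖) :=
        mul_le_mul_of_nonneg_left (ContinuousLinearMap.opNorm_comp_le _ _) (norm_nonneg _)
      _ ≤ 1 * (‖A‖ * 1) := by
        have h1 := norm_nonneg A
        have h2 := norm_nonneg P
        nlinarith [hPnorm, mul_nonneg h2 h1, mul_le_mul hPnorm hPnorm h2 zero_le_one]
      _ = ‖A‖ := by ring
  have hMsa : IsSelfAdjoint M := by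
    have : M = P * A * P := rfl
    rw [IsSelfAdjoint, this, star_mul, star_mul, hA.star_eq, hPsa.star_eq, mul_assoc]
  have hskew : ∀ B : E →L[ℂ] E, IsSelfAdjoint B → c • B ∈ skewAdjoint (E →L[ℂ] E) := by
    intro B hB
    rw [skewAdjoint.mem_iff, star_smul, hB.star_eq, ← neg_smul]
    congr 1
    simp [hc]
  have hunit : ∀ B : E →L[ℂ] E, IsSelfAdjoint B →
      ‖NormedSpace.exp (c • B) Φ‖ = 1 := by
    intro B hB
    let +nondep : NormedAlgebra ℚ (E →L[ℂ] E) := .restrictScalars ℚ ℂ (E →L[ℂ] E)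
    rw [ContinuousLinearMap.norm_map_of_mem_unitary
      (NormedSpace.exp_mem_unitary_of_mem_skewAdjoint (hskew B hB)), hΦ]
  -- agreement of powers
  have hKP : ∀ n, n < N₀ → P ((A ^ n) Φ) = (A ^ n) Φ := by
    intro n hn
    have h := hK n hn
    rw [ContinuousLinearMap.comp_apply, ContinuousLinearMap.sub_apply,
      ContinuousLinearMap.one_apply, sub_eq_zero] at h
    exact h.symm
  have key : ∀ n, n < N₀ → (M ^ n) Φ = (A ^ n) Φ := by
    intro n
    induction n with
    | zero => intro _; simp
    | succ n ih =>
      intro h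
      have hn := ih (Nat.lt_of_succ_lt h)
      have e1 : (M ^ (n+1)) Φ = M ((M ^ n) Φ) := by
        rw [pow_succ']; rfl
      have e2 : (A ^ (n+1)) Φ = A ((A ^ n) Φ) := by
        rw [pow_succ']; rfl
      rw [e1, hn, e2, hM]
      simp only [ContinuousLinearMap.comp_apply]
      rw [hKP n (Nat.lt_of_succ_lt h)]
      have : A ((A ^ n) Φ) = (A ^ (n+1)) Φ := e2.symm
      rw [this, hKP (n+1) h]
  -- series setup
  set x : ℝ := ‖A‖ * t with hxdef
  have hxnn : (0:ℝ) ≤ x := mul_nonneg (norm_nonneg A) ht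
  have hct : ‖c‖ = t := by
    rw [hc, norm_mul, Complex.norm_I, mul_one, norm_neg, Complex.norm_real,
      Real.norm_of_nonneg ht]
  have hBpow : ∀ B : E →L[ℂ] E, ‖B‖ ≤ ‖A‖ → ∀ n : ℕ, ‖((c • B) ^ n) Φ‖ ≤ x ^ n := by
    intro B hB n
    rcases Nat.eq_zero_or_pos n with h0 | h0
    · subst h0; simp [hΦ]
    calc ‖((c • B) ^ n) Φ‖ ≤ ‖(c • B) ^ n‖ * ‖Φ‖ := ContinuousLinearMap.le_opNorm _ _
      _ = ‖(c • B) ^ n‖ := by rw [hΦ, mul_one]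
      _ ≤ ‖c • B‖ ^ n := norm_pow_le' _ h0
      _ ≤ x ^ n := by
        apply pow_le_pow_left₀ (norm_nonneg _)
        rw [norm_smul, hct, hxdef]
        calc t * ‖B‖ ≤ t * ‖A‖ := mul_le_mul_of_nonneg_left hB ht
          _ = ‖A‖ * t := mul_comm _ _
  have happ : ∀ B : E →L[ℂ] E,
      NormedSpace.exp (c • B) Φ = ∑' n : ℕ, (n.factorial⁻¹ : ℂ) • ((c • B) ^ n) Φ := by
    intro B
    rw [NormedSpace.exp_eq_tsum (𝕂 := ℂ)]
    have hs : Summable fun n : ℕ => ((n.factorial)⁻¹ : ℂ) • (c • B) ^ n :=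
      NormedSpace.expSeries_summable' (𝕂 := ℂ) (c • B)
    have := (ContinuousLinearMap.apply ℂ E Φ).map_tsum hs
    simpa using this
  -- applied summability
  have hsapp : ∀ B : E →L[ℂ] E, ‖B‖ ≤ ‖A‖ →
      Summable fun n : ℕ => (n.factorial⁻¹ : ℂ) • ((c • B) ^ n) Φ := by
    intro B hB
    apply Summable.of_norm
    apply Summable.of_nonneg_of_le (fun n => norm_nonneg _) _
      (Real.summable_pow_div_factorial x)
    intro n
    rw [norm_smul, norm_inv, Complex.norm_natCast]
    rw [div_eq_inv_mul]
    exact mul_le_mul_of_nonneg_left (hBpow B hB n) (by positivity)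
  set F : ℕ → E := fun n => (n.factorial⁻¹ : ℂ) • (((c • M) ^ n) Φ - ((c • A) ^ n) Φ)
    with hF
  have hFsum : Summable F := by
    have := (hsapp M hMnorm).sub (hsapp A le_rfl)
    simpa [hF, smul_sub] using this
  have hdiff : NormedSpace.exp (c • M) Φ - NormedSpace.exp (c • A) Φ = ∑' n, F n := by
    rw [happ M, happ A, ← Summable.tsum_sub (hsapp M hMnorm) (hsapp A le_rfl)]
    congr 1
    funext n
    simp [hF, smul_sub]
  have hFzero : ∀ n, n < N₀ → F n = 0 := by
    intro n hn
    rw [hF]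
    simp only
    rw [smul_pow, smul_pow, ContinuousLinearMap.smul_apply, ContinuousLinearMap.smul_apply,
      key n hn, sub_self, smul_zero]
  have hFnorm : ∀ n : ℕ, ‖F n‖ ≤ 2 * (x ^ n / n.factorial) := by
    intro n
    rw [hF]
    simp only
    rw [norm_smul, norm_inv, Complex.norm_natCast]
    have h1 : ‖((c • M) ^ n) Φ - ((c • A) ^ n) Φ‖ ≤ x ^ n + x ^ n :=
      le_trans (norm_sub_le _ _) (add_le_add (hBpow M hMnorm n) (hBpow A le_rfl n))
    have h2 : (0:ℝ) ≤ ((n.factorial : ℝ))⁻¹ := by positivity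
    calc ((n.factorial : ℝ))⁻¹ * ‖((c • M) ^ n) Φ - ((c • A) ^ n) Φ‖
        ≤ ((n.factorial : ℝ))⁻¹ * (x ^ n + x ^ n) := mul_le_mul_of_nonneg_left h1 h2
      _ = 2 * (x ^ n / n.factorial) := by ring
  -- tail rewriting
  have hsplit : ∑' n, F n = ∑' n : ℕ, F (n + N₀) := by
    have h := Summable.sum_add_tsum_nat_add N₀ hFsum
    have hz : ∑ i ∈ Finset.range N₀, F i = 0 :=
      Finset.sum_eq_zero fun i hi => hFzero i (Finset.mem_range.mp hi)
    rw [← h, hz, zero_add]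
  have hg2 : Summable fun n : ℕ => 2 * (x ^ (n + N₀) / (n + N₀).factorial) := by
    exact (summable_nat_add_iff (f := fun n : ℕ => 2 * (x ^ n / n.factorial)) N₀).mpr
      ((Real.summable_pow_div_factorial x).mul_left 2)
  have hn1 : Summable fun n : ℕ => ‖F (n + N₀)‖ :=
    Summable.of_nonneg_of_le (fun n => norm_nonneg _) (fun n => hFnorm (n + N₀)) hg2
  have hmain : ‖NormedSpace.exp (c • M) Φ - NormedSpace.exp (c • A) Φ‖ ≤
      2 * ∑' n : ℕ, x ^ (n + N₀) / (n + N₀).factorial := by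
    rw [hdiff, hsplit]
    calc ‖∑' n : ℕ, F (n + N₀)‖ ≤ ∑' n : ℕ, ‖F (n + N₀)‖ := norm_tsum_le_tsum_norm hn1
      _ ≤ ∑' n : ℕ, 2 * (x ^ (n + N₀) / (n + N₀).factorial) :=
        Summable.tsum_le_tsum (fun n => hFnorm (n + N₀)) hn1 hg2
      _ = 2 * ∑' n : ℕ, x ^ (n + N₀) / (n + N₀).factorial := tsum_mul_left
  -- conclusion
  set r : ℝ := Real.exp 1 * ‖A‖ * t / N₀ with hrdef
  have hrx : r = Real.exp 1 * x / N₀ := by rw [hrdef, hxdef, mul_assoc]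
  rcases le_or_gt 1 r with hr | hr
  · -- trivial bound via unitarity
    have h2 : ‖NormedSpace.exp (c • M) Φ - NormedSpace.exp (c • A) Φ‖ ≤ 2 := by
      refine le_trans (norm_sub_le _ _) ?_
      rw [hunit M hMsa, hunit A hA]
      norm_num
    refine le_trans h2 ?_
    have h3 : (1:ℝ) ≤ r ^ N₀ := by
      simpa using pow_le_pow_left₀ zero_le_one hr N₀
    linarith
  · have hrlt : Real.exp 1 * x / N₀ < 1 := by rw [← hrx]; exact hr
    have := tail_bound x hxnn N₀ hN₀ hrlt
    refine le_trans hmain ?_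
    rw [hrx]
    linarith [this]
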